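/- Let K be a field and let W : ℤ → K satisfy W(−h) = −W(h) for all h ∈ ℤ, W(0) = 0, W(1) = 1, W(h) ≠ 0 for all h ≥ 1, and the recurrence W(h−2)·W(h+2) = W(2)²·W(h−1)·W(h+1) − W(1)·W(3)·W(h)² for all h ≥ 3. Then for all integers h ≥ m ≥ 1: W(h−m)·W(h+m) = W(m)²·W(h−1)·W(h+1) − W(m−1)·W(m+1)·W(h)². (Morgan Ward's definition of elliptic divisibility sequences is coherent: the relation with gap parameter m = 2 entails the relation for every m.) -/

import Mathlib

theorem ward_coherence_even {K : Type*} [Field K] (W : ℤ → K)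
    (hWneg : ∀ h : ℤ, W (-h) = -W h)
    (hW0 : W 0 = 0) (hW1 : W 1 = 1)
    (hWne : ∀ h : ℤ, 1 ≤ h → W h ≠ 0)
    (hrec : ∀ h : ℤ, 3 ≤ h →
      W (h - 2) * W (h + 2) = (W 2) ^ 2 * (W (h - 1) * W (h + 1)) - W 1 * W 3 * (W h) ^ 2) :
    ∀ h m : ℤ, 1 ≤ m → m ≤ h →
      W (h - m) * W (h + m) = (W m) ^ 2 * (W (h - 1) * W (h + 1)) -
        W (m - 1) * W (m + 1) * (W h) ^ 2 := by
  -- extend the recurrence to all integers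
  have hrec' : ∀ h : ℤ, W (h - 2) * W (h + 2) =
      W 2 ^ 2 * (W (h - 1) * W (h + 1)) - W 3 * W h ^ 2 := by
    intro h
    rcases le_or_gt 3 h with h3 | h3
    · have := hrec h h3; rw [hW1, one_mul] at this; exact this
    rcases le_or_gt h (-3) with hn | hn
    · obtain ⟨g, rfl⟩ : ∃ g : ℤ, h = -g := ⟨-h, (neg_neg h).symm⟩
      have hg : 3 ≤ g := by omega
      have H := hrec g hg
      rw [hW1, one_mul] at H
      have n1 : W (-g - 2) = -W (g + 2) := by rw [show -g - 2 = -(g + 2) by ring, hWneg]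
      have n2 : W (-g + 2) = -W (g - 2) := by rw [show -g + 2 = -(g - 2) by ring, hWneg]
      have n3 : W (-g - 1) = -W (g + 1) := by rw [show -g - 1 = -(g + 1) by ring, hWneg]
      have n4 : W (-g + 1) = -W (g - 1) := by rw [show -g + 1 = -(g - 1) by ring, hWneg]
      have n5 : W (-g) = -W g := hWneg g
      rw [n1, n2, n3, n4, n5]
      linear_combination H
    · have hb : -3 < h := hn
      interval_cases h <;>
        norm_num [hW0, hW1, hWneg 1, hWneg 2, hWneg 3] <;> ring
  -- the "G" step identity
  have hGstep : ∀ x : ℤ,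
      (W (x - 1) * W (x + 2) ^ 2 + W (x + 3) * W x ^ 2 + W 2 ^ 2 * W (x + 1) ^ 3) * W (x - 1) =
      (W (x - 2) * W (x + 1) ^ 2 + W (x + 2) * W (x - 1) ^ 2 + W 2 ^ 2 * W x ^ 3) * W (x + 2) := by
    intro x
    have e4 := hrec' x
    have e4' := hrec' (x + 1)
    rw [show x + 1 - 2 = x - 1 by ring, show x + 1 + 2 = x + 3 by ring,
        show x + 1 - 1 = x by ring, show x + 1 + 1 = x + 2 by ring] at e4'
    linear_combination (W x ^ 2) * e4' - (W (x + 1) ^ 2) * e4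
  -- the "G/K" quantity is constant
  have hGconst : ∀ p : ℤ, 2 ≤ p → ∀ h, p ≤ h →
      (W (p - 2) * W (p + 1) ^ 2 + W (p + 2) * W (p - 1) ^ 2 + W 2 ^ 2 * W p ^ 3) *
        (W (h - 1) * W h * W (h + 1)) =
      (W (h - 2) * W (h + 1) ^ 2 + W (h + 2) * W (h - 1) ^ 2 + W 2 ^ 2 * W h ^ 3) *
        (W (p - 1) * W p * W (p + 1)) := by
    intro p hp h hph
    refine Int.le_induction (motive := fun x _ =>
      (W (p - 2) * W (p + 1) ^ 2 + W (p + 2) * W (p - 1) ^ 2 + W 2 ^ 2 * W p ^ 3) *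
        (W (x - 1) * W x * W (x + 1)) =
      (W (x - 2) * W (x + 1) ^ 2 + W (x + 2) * W (x - 1) ^ 2 + W 2 ^ 2 * W x ^ 3) *
        (W (p - 1) * W p * W (p + 1))) ?_ ?_ h hph
    · ring
    · intro t ht IH
      have hK : W (t - 1) * W t * W (t + 1) ≠ 0 := by
        refine mul_ne_zero (mul_ne_zero ?_ ?_) ?_ <;> exact hWne _ (by omega)
      rw [show t + 1 - 1 = t by ring, show t + 1 + 1 = t + 2 by ring,
          show t + 1 - 2 = t - 1 by ring, show t + 1 + 2 = t + 3 by ring]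
      apply mul_right_cancel₀ hK
      have gs := hGstep t
      linear_combination (W t * W (t + 1) * W (t + 2)) * IH -
        (W (p - 1) * W p * W (p + 1) * W t * W (t + 1)) * gs
  -- the induction step on the gap
  have hstep : ∀ m : ℤ, 1 ≤ m →
      (∀ h, m ≤ h → W (h - m) * W (h + m) =
        W m ^ 2 * (W (h - 1) * W (h + 1)) - W (m - 1) * W (m + 1) * W h ^ 2) →
      (∀ h, m + 1 ≤ h → W (h - (m + 1)) * W (h + (m + 1)) =
        W (m + 1) ^ 2 * (W (h - 1) * W (h + 1)) - W (m + 1 - 1) * W (m + 1 + 1) * W h ^ 2) →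
      ∀ h, m + 1 + 1 ≤ h → W (h - (m + 1 + 1)) * W (h + (m + 1 + 1)) =
        W (m + 1 + 1) ^ 2 * (W (h - 1) * W (h + 1)) -
          W (m + 1 + 1 - 1) * W (m + 1 + 1 + 1) * W h ^ 2 := by
    intro m hm A B h hh
    rw [show m + 1 + 1 = m + 2 by ring]
    rw [show h - (m + 2) = h - m - 2 by ring, show h + (m + 2) = h + m + 2 by ring,
        show m + 2 - 1 = m + 1 by ring, show m + 2 + 1 = m + 3 by ring]
    have e1 := B (h - 1) (by omega)
    rw [show h - 1 - (m + 1) = h - m - 2 by ring, show h - 1 + (m + 1) = h + m by ring,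
        show h - 1 - 1 = h - 2 by ring, show h - 1 + 1 = h by ring,
        show m + 1 - 1 = m by ring, show m + 1 + 1 = m + 2 by ring] at e1
    have e2 := B (h + 1) (by omega)
    rw [show h + 1 - (m + 1) = h - m by ring, show h + 1 + (m + 1) = h + m + 2 by ring,
        show h + 1 - 1 = h by ring, show h + 1 + 1 = h + 2 by ring,
        show m + 1 - 1 = m by ring, show m + 1 + 1 = m + 2 by ring] at e2
    have e3 := A h (by omega)
    have e4 := hrec' h
    have e5 := hrec' (m + 1)
    rw [show m + 1 - 2 = m - 1 by ring, show m + 1 + 2 = m + 3 by ring,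
        show m + 1 - 1 = m by ring, show m + 1 + 1 = m + 2 by ring] at e5
    have e6 := hGconst (m + 1) (by omega) h (by omega)
    rw [show m + 1 - 2 = m - 1 by ring, show m + 1 + 2 = m + 3 by ring,
        show m + 1 - 1 = m by ring, show m + 1 + 1 = m + 2 by ring] at e6
    have hD : W (h - m) * W (h + m) ≠ 0 :=
      mul_ne_zero (hWne _ (by omega)) (hWne _ (by omega))
    apply mul_right_cancel₀ hD
    linear_combination (W (h - m) * W (h + m + 2)) * e1 +
      (W (m + 1) ^ 2 * (W (h - 2) * W h) - W m * W (m + 2) * W (h - 1) ^ 2) * e2 -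
      (W (m + 2) ^ 2 * (W (h - 1) * W (h + 1)) - W (m + 1) * W (m + 3) * W h ^ 2) * e3 +
      (W h ^ 2 * W (m + 1) ^ 4) * e4 - (W h ^ 4 * W (m + 1) ^ 2) * e5 +
      (W h * W (m + 1)) * e6
  -- master double statement by induction on the gap
  have master : ∀ m : ℤ, 1 ≤ m →
      (∀ h, m ≤ h → W (h - m) * W (h + m) =
        W m ^ 2 * (W (h - 1) * W (h + 1)) - W (m - 1) * W (m + 1) * W h ^ 2) ∧
      (∀ h, m + 1 ≤ h → W (h - (m + 1)) * W (h + (m + 1)) =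
        W (m + 1) ^ 2 * (W (h - 1) * W (h + 1)) - W (m + 1 - 1) * W (m + 1 + 1) * W h ^ 2) := by
    intro m hm
    refine Int.le_induction (motive := fun x _ =>
      (∀ h, x ≤ h → W (h - x) * W (h + x) =
        W x ^ 2 * (W (h - 1) * W (h + 1)) - W (x - 1) * W (x + 1) * W h ^ 2) ∧
      (∀ h, x + 1 ≤ h → W (h - (x + 1)) * W (h + (x + 1)) =
        W (x + 1) ^ 2 * (W (h - 1) * W (h + 1)) - W (x + 1 - 1) * W (x + 1 + 1) * W h ^ 2)) ?_ ?_ m hm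
    · constructor
      · intro h hh
        rw [show (1 : ℤ) - 1 = 0 by norm_num, show (1 : ℤ) + 1 = 2 by norm_num, hW0, hW1]
        ring
      · intro h hh
        rw [show (1 : ℤ) + 1 = 2 by norm_num, show (2 : ℤ) - 1 = 1 by norm_num,
            show (2 : ℤ) + 1 = 3 by norm_num, hW1, one_mul]
        exact hrec' h
    · intro n hn IH
      exact ⟨IH.2, hstep n hn IH.1 IH.2⟩
  intro h m hm hmh
  exact (master m hm).1 h hmh
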